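/- arXiv:1707.07645 — 2 statements merged into one kernel-verified Lean document; each statement's English description precedes it below -/
import Mathlib

section
/- Let u : ℝ² → ℝ be a C³ solution of u_yy = (u_y + 2x)·u_xx + (y − u_x)·u_xy − u_x. Then the function v(x,y) := 3u − 2x·u_x − y·u_y satisfies the linearized equation v_yy = (u_y + 2x)·v_xx + u_xx·v_y + (y − u_x)·v_xy − (u_xy + 1)·v_x at every point of ℝ². -/
/-- Partial derivative of `f : ℝ² → ℝ` in the direction `v`. -/
noncomputable def pd2 (v : ℝ × ℝ) (f : ℝ × ℝ → ℝ) : ℝ × ℝ → ℝ :=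
  fun p => fderiv ℝ f p v

noncomputable def dx : (ℝ × ℝ → ℝ) → ℝ × ℝ → ℝ := pd2 (1, 0)
noncomputable def dy : (ℝ × ℝ → ℝ) → ℝ × ℝ → ℝ := pd2 (0, 1)

lemma contDiff_pd2 {f : ℝ × ℝ → ℝ} {m n : WithTop ℕ∞} (w : ℝ × ℝ)
    (hf : ContDiff ℝ n f) (h : m + 1 ≤ n) : ContDiff ℝ m (pd2 w f) :=
  (hf.fderiv_right h).clm_apply contDiff_const

lemma pd2_comm {f : ℝ × ℝ → ℝ} (hf : ContDiff ℝ 2 f) (a b : ℝ × ℝ) (p : ℝ × ℝ) :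
    pd2 a (pd2 b f) p = pd2 b (pd2 a f) p := by
  have hs := (hf.contDiffAt (x := p)).isSymmSndFDerivAt (by norm_num)
  have hd : DifferentiableAt ℝ (fderiv ℝ f) p :=
    ((hf.fderiv_right (m := 1) (by norm_num)).differentiable (by norm_num)) p
  have key : ∀ v w : ℝ × ℝ, pd2 v (pd2 w f) p = fderiv ℝ (fderiv ℝ f) p v w := by
    intro v w
    show fderiv ℝ (fun q => (fderiv ℝ f q) w) p v = _
    rw [fderiv_clm_apply hd (differentiableAt_const w)]
    simp
  rw [key, key, hs]

lemma pd2_expand (A : ℝ) (f g h : ℝ × ℝ → ℝ) (w p : ℝ × ℝ)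
    (hf : DifferentiableAt ℝ f p) (hg : DifferentiableAt ℝ g p)
    (hh : DifferentiableAt ℝ h p) :
    pd2 w (fun q => A * f q - 2 * q.1 * g q - q.2 * h q) p
      = A * pd2 w f p - (2 * w.1 * g p + 2 * p.1 * pd2 w g p)
        - (w.2 * h p + p.2 * pd2 w h p) := by
  have h1 : DifferentiableAt ℝ (fun q : ℝ × ℝ => A * f q) p := hf.const_mul A
  have hx : DifferentiableAt ℝ (fun q : ℝ × ℝ => 2 * q.1) p :=
    differentiableAt_fst.const_mul 2
  have h2 : DifferentiableAt ℝ (fun q : ℝ × ℝ => 2 * q.1 * g q) p := hx.mul hg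
  have h3 : DifferentiableAt ℝ (fun q : ℝ × ℝ => q.2 * h q) p :=
    differentiableAt_snd.mul hh
  show fderiv ℝ _ p w = _
  rw [fderiv_fun_sub (f := fun q => A * f q - 2 * q.1 * g q) (h1.sub h2) h3, fderiv_fun_sub h1 h2, fderiv_const_mul hf,
    fderiv_fun_mul hx hg, fderiv_fun_mul differentiableAt_snd hh, fderiv_const_mul differentiableAt_fst]
  simp [pd2, fderiv_fst, fderiv_snd]
  ring

lemma pd2_expand2 (a b c d : ℝ × ℝ → ℝ) (w p : ℝ × ℝ)
    (ha : DifferentiableAt ℝ a p) (hb : DifferentiableAt ℝ b p)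
    (hc : DifferentiableAt ℝ c p) (hd : DifferentiableAt ℝ d p) :
    pd2 w (fun q => (a q + 2 * q.1) * b q + (q.2 - c q) * d q - c q) p
      = (pd2 w a p + 2 * w.1) * b p + (a p + 2 * p.1) * pd2 w b p
        + (w.2 - pd2 w c p) * d p + (p.2 - c p) * pd2 w d p - pd2 w c p := by
  have h1 : DifferentiableAt ℝ (fun q : ℝ × ℝ => a q + 2 * q.1) p :=
    ha.add (differentiableAt_fst.const_mul 2)
  have h2 : DifferentiableAt ℝ (fun q : ℝ × ℝ => q.2 - c q) p :=
    differentiableAt_snd.sub hc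
  show fderiv ℝ _ p w = _
  rw [fderiv_fun_sub (f := fun q => (a q + 2 * q.1) * b q + (q.2 - c q) * d q)
      ((h1.mul hb).add (h2.mul hd)) hc,
    fderiv_fun_add (f := fun q => (a q + 2 * q.1) * b q) (g := fun q => (q.2 - c q) * d q)
      (h1.mul hb) (h2.mul hd),
    fderiv_fun_mul h1 hb, fderiv_fun_mul h2 hd, fderiv_fun_add ha (differentiableAt_fst.const_mul 2),
    fderiv_fun_sub differentiableAt_snd hc, fderiv_const_mul differentiableAt_fst]
  simp [pd2, fderiv_fst, fderiv_snd]
  ring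

theorem gamma_0_is_symmetry (u : ℝ × ℝ → ℝ) (hu : ContDiff ℝ 3 u)
    (heq : ∀ p : ℝ × ℝ,
      dy (dy u) p = (dy u p + 2 * p.1) * dx (dx u) p
        + (p.2 - dx u p) * dx (dy u) p - dx u p) :
    ∀ p : ℝ × ℝ,
      (fun v : ℝ × ℝ → ℝ =>
        dy (dy v) p = (dy u p + 2 * p.1) * dx (dx v) p + dx (dx u) p * dy v p
          + (p.2 - dx u p) * dx (dy v) p - (dx (dy u) p + 1) * dx v p)
      (fun q => 3 * u q - 2 * q.1 * dx u q - q.2 * dy u q) := by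
  intro p
  -- basic smoothness facts
  have hu2 : ContDiff ℝ 2 u := hu.of_le (by norm_num)
  have hux : ContDiff ℝ 2 (dx u) := contDiff_pd2 _ hu (by norm_num)
  have huy : ContDiff ℝ 2 (dy u) := contDiff_pd2 _ hu (by norm_num)
  have huxx : ContDiff ℝ 1 (dx (dx u)) := contDiff_pd2 _ hux (by norm_num)
  have huxy : ContDiff ℝ 1 (dx (dy u)) := contDiff_pd2 _ huy (by norm_num)
  have huyx : ContDiff ℝ 1 (dy (dx u)) := contDiff_pd2 _ hux (by norm_num)
  have huyy : ContDiff ℝ 1 (dy (dy u)) := contDiff_pd2 _ huy (by norm_num)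
  have du : ∀ q, DifferentiableAt ℝ u q := fun q => (hu.differentiable (by norm_num)) q
  have dux : ∀ q, DifferentiableAt ℝ (dx u) q := fun q => (hux.differentiable (by norm_num)) q
  have duy : ∀ q, DifferentiableAt ℝ (dy u) q := fun q => (huy.differentiable (by norm_num)) q
  have duxx : ∀ q, DifferentiableAt ℝ (dx (dx u)) q := fun q => (huxx.differentiable (by norm_num)) q
  have duxy : ∀ q, DifferentiableAt ℝ (dx (dy u)) q := fun q => (huxy.differentiable (by norm_num)) q
  have duyx : ∀ q, DifferentiableAt ℝ (dy (dx u)) q := fun q => (huyx.differentiable (by norm_num)) q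
  have duyy : ∀ q, DifferentiableAt ℝ (dy (dy u)) q := fun q => (huyy.differentiable (by norm_num)) q
  -- symmetry of mixed second partials
  have s1 : dy (dx u) = dx (dy u) := funext fun q => pd2_comm hu2 (0,1) (1,0) q
  -- first derivatives of v
  have hdxv : dx (fun q => 3 * u q - 2 * q.1 * dx u q - q.2 * dy u q)
      = fun q => 1 * dx u q - 2 * q.1 * dx (dx u) q - q.2 * dx (dy u) q := by
    funext q
    show pd2 (1,0) _ q = _
    rw [pd2_expand 3 u (dx u) (dy u) (1,0) q (du q) (dux q) (duy q)]
    show (3:ℝ) * dx u q - (2 * 1 * dx u q + 2 * q.1 * dx (dx u) q)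
      - (0 * dy u q + q.2 * dx (dy u) q) = _
    ring
  have hdyv : dy (fun q => 3 * u q - 2 * q.1 * dx u q - q.2 * dy u q)
      = fun q => 2 * dy u q - 2 * q.1 * dy (dx u) q - q.2 * dy (dy u) q := by
    funext q
    show pd2 (0,1) _ q = _
    rw [pd2_expand 3 u (dx u) (dy u) (0,1) q (du q) (dux q) (duy q)]
    show (3:ℝ) * dy u q - (2 * 0 * dx u q + 2 * q.1 * dy (dx u) q)
      - (1 * dy u q + q.2 * dy (dy u) q) = _
    ring
  -- second derivatives of v
  have hdxxv : dx (dx (fun q => 3 * u q - 2 * q.1 * dx u q - q.2 * dy u q)) p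
      = 1 * dx (dx u) p - (2 * 1 * dx (dx u) p + 2 * p.1 * dx (dx (dx u)) p)
        - (0 * dx (dy u) p + p.2 * dx (dx (dy u)) p) := by
    rw [hdxv]
    exact pd2_expand 1 (dx u) (dx (dx u)) (dx (dy u)) (1,0) p (dux p) (duxx p) (duxy p)
  have hdxyv : dx (dy (fun q => 3 * u q - 2 * q.1 * dx u q - q.2 * dy u q)) p
      = 2 * dx (dy u) p - (2 * 1 * dy (dx u) p + 2 * p.1 * dx (dy (dx u)) p)
        - (0 * dy (dy u) p + p.2 * dx (dy (dy u)) p) := by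
    rw [hdyv]
    exact pd2_expand 2 (dy u) (dy (dx u)) (dy (dy u)) (1,0) p (duy p) (duyx p) (duyy p)
  have hdyyv : dy (dy (fun q => 3 * u q - 2 * q.1 * dx u q - q.2 * dy u q)) p
      = 2 * dy (dy u) p - (2 * 0 * dy (dx u) p + 2 * p.1 * dy (dy (dx u)) p)
        - (1 * dy (dy u) p + p.2 * dy (dy (dy u)) p) := by
    rw [hdyv]
    exact pd2_expand 2 (dy u) (dy (dx u)) (dy (dy u)) (0,1) p (duy p) (duyx p) (duyy p)
  -- third derivative symmetry
  have s2 : dy (dx (dx u)) p = dx (dx (dy u)) p := by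
    calc dy (dx (dx u)) p = dx (dy (dx u)) p := pd2_comm hux (0,1) (1,0) p
      _ = dx (dx (dy u)) p := by rw [s1]
  have s3 : dy (dx (dy u)) p = dx (dy (dy u)) p := pd2_comm huy (0,1) (1,0) p
  have s4 : dy (dy (dx u)) p = dx (dy (dy u)) p := by
    have : dy (dy (dx u)) p = dy (dx (dy u)) p := by rw [s1]
    rw [this, s3]
  have s2' : dx (dy (dx u)) p = dx (dx (dy u)) p := by rw [s1]
  -- the PDE as a function identity
  have heqf : dy (dy u) = fun q => (dy u q + 2 * q.1) * dx (dx u) q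
      + (q.2 - dx u q) * dx (dy u) q - dx u q := funext heq
  -- x- and y-derivatives of the PDE
  have E1 : dx (dy (dy u)) p
      = (dx (dy u) p + 2 * 1) * dx (dx u) p + (dy u p + 2 * p.1) * dx (dx (dx u)) p
        + (0 - dx (dx u) p) * dx (dy u) p + (p.2 - dx u p) * dx (dx (dy u)) p
        - dx (dx u) p := by
    conv_lhs => rw [heqf]
    exact pd2_expand2 (dy u) (dx (dx u)) (dx u) (dx (dy u)) (1,0) p
      (duy p) (duxx p) (dux p) (duxy p)
  have E2 : dy (dy (dy u)) p
      = (dy (dy u) p + 2 * 0) * dx (dx u) p + (dy u p + 2 * p.1) * dy (dx (dx u)) p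
        + (1 - dy (dx u) p) * dx (dy u) p + (p.2 - dx u p) * dy (dx (dy u)) p
        - dy (dx u) p := by
    conv_lhs => rw [heqf]
    exact pd2_expand2 (dy u) (dx (dx u)) (dx u) (dx (dy u)) (0,1) p
      (duy p) (duxx p) (dux p) (duxy p)
  rw [hdyyv, hdxxv, hdxyv, hdxv, hdyv]
  simp only []
  rw [show dy (dx u) p = dx (dy u) p from congrFun s1 p] at E2 ⊢
  rw [s2] at E2
  rw [s3] at E2
  rw [s4, s2', E2, E1, heq p]
  ring
end

section
/- Let U ⊆ ℝ² be open, let u : U → ℝ be a C² solution of u_yy = (u_y + 2x)·u_xx + (y − u_x)·u_xy − u_x, let c ∈ ℝ, and let a, b : U → ℝ be C² functions satisfying on all of U: b_x = a_y + u_x·a_x and b_y = (u_y + 2x)·a_x + y·a_y − c·a. For a C² function f : U → ℝ and m ∈ ℝ define C_m(f) := f_yy + (u_x − y)·f_xy − (u_y + 2x)·f_xx + m·f_x. Then C_{c−1}(b) = y·C_{c−2}(a) at every point of U. -/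
open Filter

/-- The compatibility obstruction operator for equation (3):
`C_m(f) = f_yy + (u_x − y)·f_xy − (u_y + 2x)·f_xx + m·f_x`. -/
noncomputable def Cop (u : ℝ × ℝ → ℝ) (m : ℝ) (f : ℝ × ℝ → ℝ) : ℝ × ℝ → ℝ :=
  fun p => dy (dy f) p + (dx u p - p.2) * dx (dy f) p
    - (dy u p + 2 * p.1) * dx (dx f) p + m * dx f p

lemma pd2_congr {f g : ℝ × ℝ → ℝ} {p : ℝ × ℝ} (v : ℝ × ℝ) (h : f =ᶠ[nhds p] g) :
    pd2 v f p = pd2 v g p := by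
  simp only [pd2, h.fderiv_eq]

lemma pd2_add {f g : ℝ × ℝ → ℝ} {p : ℝ × ℝ} (v : ℝ × ℝ)
    (hf : DifferentiableAt ℝ f p) (hg : DifferentiableAt ℝ g p) :
    pd2 v (fun q => f q + g q) p = pd2 v f p + pd2 v g p := by
  simp only [pd2, fderiv_fun_add hf hg, ContinuousLinearMap.add_apply]

lemma pd2_sub {f g : ℝ × ℝ → ℝ} {p : ℝ × ℝ} (v : ℝ × ℝ)
    (hf : DifferentiableAt ℝ f p) (hg : DifferentiableAt ℝ g p) :
    pd2 v (fun q => f q - g q) p = pd2 v f p - pd2 v g p := by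
  simp only [pd2, fderiv_fun_sub hf hg, ContinuousLinearMap.sub_apply]

lemma pd2_mul {f g : ℝ × ℝ → ℝ} {p : ℝ × ℝ} (v : ℝ × ℝ)
    (hf : DifferentiableAt ℝ f p) (hg : DifferentiableAt ℝ g p) :
    pd2 v (fun q => f q * g q) p = pd2 v f p * g p + f p * pd2 v g p := by
  simp only [pd2, fderiv_fun_mul hf hg, ContinuousLinearMap.add_apply,
    ContinuousLinearMap.smul_apply, smul_eq_mul]
  ring

lemma pd2_const_mul {f : ℝ × ℝ → ℝ} {p : ℝ × ℝ} (v : ℝ × ℝ) (k : ℝ)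
    (hf : DifferentiableAt ℝ f p) :
    pd2 v (fun q => k * f q) p = k * pd2 v f p := by
  simp only [pd2, fderiv_const_mul hf k, ContinuousLinearMap.smul_apply, smul_eq_mul]

lemma pd2_fst {p : ℝ × ℝ} (v : ℝ × ℝ) : pd2 v (fun q : ℝ × ℝ => q.1) p = v.1 := by
  simp [pd2, fderiv_fst]

lemma pd2_snd {p : ℝ × ℝ} (v : ℝ × ℝ) : pd2 v (fun q : ℝ × ℝ => q.2) p = v.2 := by
  simp [pd2, fderiv_snd]

lemma pd2_diff {f : ℝ × ℝ → ℝ} {p : ℝ × ℝ} (hf : ContDiffAt ℝ 2 f p) (v : ℝ × ℝ) :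
    DifferentiableAt ℝ (pd2 v f) p := by
  have hd : DifferentiableAt ℝ (fderiv ℝ f) p :=
    (hf.fderiv_right (m := 1) (by norm_num)).differentiableAt one_ne_zero
  exact ((ContinuousLinearMap.apply ℝ ℝ v).differentiableAt).comp p hd

lemma pd2_pd2 {f : ℝ × ℝ → ℝ} {p : ℝ × ℝ} (hf : ContDiffAt ℝ 2 f p) (v w : ℝ × ℝ) :
    pd2 w (pd2 v f) p = fderiv ℝ (fderiv ℝ f) p w v := by
  have hd : DifferentiableAt ℝ (fderiv ℝ f) p :=
    (hf.fderiv_right (m := 1) (by norm_num)).differentiableAt one_ne_zero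
  have hcomp : pd2 w (pd2 v f) p
      = fderiv ℝ ((ContinuousLinearMap.apply ℝ ℝ v) ∘ (fderiv ℝ f)) p w := rfl
  rw [hcomp, fderiv_comp p ((ContinuousLinearMap.apply ℝ ℝ v).differentiableAt) hd]
  simp

theorem covering_compatibility_eq3 (U : Set (ℝ × ℝ)) (hU : IsOpen U)
    (u a b : ℝ × ℝ → ℝ) (c : ℝ)
    (hu : ContDiffOn ℝ 2 u U)
    (ha : ContDiffOn ℝ 2 a U) (hb : ContDiffOn ℝ 2 b U)
    (hueq : ∀ p ∈ U,
      dy (dy u) p = (dy u p + 2 * p.1) * dx (dx u) p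
        + (p.2 - dx u p) * dx (dy u) p - dx u p)
    (hbx : ∀ p ∈ U, dx b p = dy a p + dx u p * dx a p)
    (hby : ∀ p ∈ U, dy b p = (dy u p + 2 * p.1) * dx a p + p.2 * dy a p - c * a p) :
    ∀ p ∈ U, Cop u (c - 1) b p = p.2 * Cop u (c - 2) a p := by
  intro p hp
  have hUp : U ∈ nhds p := hU.mem_nhds hp
  have hu2 : ContDiffAt ℝ 2 u p := hu.contDiffAt hUp
  have ha2 : ContDiffAt ℝ 2 a p := ha.contDiffAt hUp
  have hda : DifferentiableAt ℝ a p := ha2.differentiableAt two_ne_zero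
  have hdux : DifferentiableAt ℝ (dx u) p := pd2_diff hu2 (1, 0)
  have hduy : DifferentiableAt ℝ (dy u) p := pd2_diff hu2 (0, 1)
  have hdax : DifferentiableAt ℝ (dx a) p := pd2_diff ha2 (1, 0)
  have hday : DifferentiableAt ℝ (dy a) p := pd2_diff ha2 (0, 1)
  have hd2x : DifferentiableAt ℝ (fun q : ℝ × ℝ => 2 * q.1) p :=
    (differentiableAt_fst).const_mul 2
  have hsum : DifferentiableAt ℝ (fun q : ℝ × ℝ => dy u q + 2 * q.1) p := hduy.add hd2x
  -- symmetry of second derivatives of a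
  have hsyma : dy (dx a) p = dx (dy a) p := by
    show pd2 (0, 1) (pd2 (1, 0) a) p = pd2 (1, 0) (pd2 (0, 1) a) p
    rw [pd2_pd2 ha2, pd2_pd2 ha2]
    exact (ha2.isSymmSndFDerivAt (by simp)).eq _ _
  -- derivatives of the RHS of hbx
  have key1 : ∀ v : ℝ × ℝ,
      pd2 v (fun q => dy a q + dx u q * dx a q) p
        = pd2 v (dy a) p + (pd2 v (dx u) p * dx a p + dx u p * pd2 v (dx a) p) := by
    intro v
    rw [pd2_add v hday (hdux.fun_mul hdax), pd2_mul v hdux hdax]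
  -- derivatives of the RHS of hby
  have key2 : ∀ v : ℝ × ℝ,
      pd2 v (fun q => (dy u q + 2 * q.1) * dx a q + q.2 * dy a q - c * a q) p
        = (pd2 v (dy u) p + 2 * v.1) * dx a p + (dy u p + 2 * p.1) * pd2 v (dx a) p
          + (v.2 * dy a p + p.2 * pd2 v (dy a) p) - c * pd2 v a p := by
    intro v
    rw [pd2_sub v ((hsum.fun_mul hdax).fun_add (differentiableAt_snd.fun_mul hday)) (hda.const_mul c),
      pd2_add v (hsum.fun_mul hdax) (differentiableAt_snd.fun_mul hday),
      pd2_mul v hsum hdax, pd2_mul v differentiableAt_snd hday,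
      pd2_add v hduy hd2x, pd2_const_mul v 2 differentiableAt_fst,
      pd2_fst, pd2_snd, pd2_const_mul v c hda]
  have hev1 : dx b =ᶠ[nhds p] fun q => dy a q + dx u q * dx a q :=
    eventually_of_mem hUp hbx
  have hev2 : dy b =ᶠ[nhds p] fun q => (dy u q + 2 * q.1) * dx a q + q.2 * dy a q - c * a q :=
    eventually_of_mem hUp hby
  have e_xx : dx (dx b) p
      = dx (dy a) p + (dx (dx u) p * dx a p + dx u p * dx (dx a) p) :=
    (pd2_congr (1, 0) hev1).trans (key1 (1, 0))
  have e_xy : dx (dy b) p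
      = (dx (dy u) p + 2 * 1) * dx a p + (dy u p + 2 * p.1) * dx (dx a) p
        + (0 * dy a p + p.2 * dx (dy a) p) - c * dx a p :=
    (pd2_congr (1, 0) hev2).trans (key2 (1, 0))
  have e_yy : dy (dy b) p
      = (dy (dy u) p + 2 * 0) * dx a p + (dy u p + 2 * p.1) * dy (dx a) p
        + (1 * dy a p + p.2 * dy (dy a) p) - c * dy a p :=
    (pd2_congr (0, 1) hev2).trans (key2 (0, 1))
  simp only [Cop]
  rw [e_xx, e_xy, e_yy, hbx p hp, hueq p hp, hsyma]
  ring
end
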